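/- Let f_1, …, f_k be real analytic functions on a real interval I, and let Υ = {x ∈ I : there exists i ≤ k with W(f_1, …, f_i)(x) = 0}. If Υ is finite, then for any real constants a_1, …, a_k that are not all zero, Z_I(a_1 f_1 + … + a_k f_k) ≤ (1 + |Υ|)·k − 1. -/

import Mathlib

/-- The Wronskian of the first `j` functions of the family `f`, with derivatives
taken within the set `I`. -/
noncomputable def wronskianOn (I : Set ℝ) (f : ℕ → ℝ → ℝ) (j : ℕ) (x : ℝ) : ℝ :=
  (Matrix.of fun r c : Fin j => iteratedDerivWithin (r : ℕ) (f (c : ℕ)) I x).det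

open Set Finset

private lemma binom_recomb (A : ℕ → ℕ → ℝ) (n : ℕ) :
    ∑ i ∈ range (n+1), (n.choose i : ℝ) * (A (i+1) (n-i) + A i (n-i+1)) =
    ∑ i ∈ range (n+2), ((n+1).choose i : ℝ) * A i (n+1-i) := by
  rw [Finset.sum_range_succ' (fun i => ((n+1).choose i : ℝ) * A i (n+1-i)) (n+1)]
  have h1 : ∀ i ∈ range (n+1), ((n+1).choose (i+1) : ℝ) * A (i+1) (n+1-(i+1))
      = (n.choose i : ℝ) * A (i+1) (n-i) + (n.choose (i+1) : ℝ) * A (i+1) (n-i) := by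
    intro i _
    rw [Nat.choose_succ_succ, Nat.succ_sub_succ]
    push_cast; ring
  rw [Finset.sum_congr rfl h1, Finset.sum_add_distrib]
  have h2 : ∑ i ∈ range (n+1), (n.choose i : ℝ) * A i (n-i+1)
      = ∑ i ∈ range (n+1), (n.choose (i+1) : ℝ) * A (i+1) (n-i) + (n.choose 0 : ℝ) * A 0 (n+1) := by
    rw [Finset.sum_range_succ (fun i => (n.choose (i+1) : ℝ) * A (i+1) (n-i)) n]
    rw [Nat.choose_succ_self]
    rw [Finset.sum_range_succ' (fun i => (n.choose i : ℝ) * A i (n-i+1)) n]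
    simp only [Nat.cast_zero, zero_mul, add_zero, Nat.sub_zero]
    congr 1
    refine Finset.sum_congr rfl fun i hi => ?_
    have : n - (i+1) + 1 = n - i := by
      have := Finset.mem_range.mp hi; omega
    rw [this]
  simp only [mul_add, Finset.sum_add_distrib, h2, Nat.choose_zero_right, Nat.cast_one,
    Nat.sub_zero]
  ring


private lemma idw_smooth {s : Set ℝ} (hs : UniqueDiffOn ℝ s) {f : ℝ → ℝ}
    (hf : ContDiffOn ℝ (⊤ : ℕ∞) f s) (n : ℕ) :
    ContDiffOn ℝ (⊤ : ℕ∞) (iteratedDerivWithin n f s) s := by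
  induction n with
  | zero => simpa using hf
  | succ n ih =>
    have h1 : ContDiffOn ℝ (⊤ : ℕ∞) (derivWithin (iteratedDerivWithin n f s) s) s :=
      ih.derivWithin hs (by exact_mod_cast le_top)
    exact h1.congr fun x hx => congrFun iteratedDerivWithin_succ x

private lemma idw_diff {s : Set ℝ} (hs : UniqueDiffOn ℝ s) {f : ℝ → ℝ}
    (hf : ContDiffOn ℝ (⊤ : ℕ∞) f s) (n : ℕ) {x : ℝ} (hx : x ∈ s) :
    DifferentiableWithinAt ℝ (iteratedDerivWithin n f s) s x :=
  (idw_smooth hs hf n).differentiableOn (by simp) x hx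

private lemma derivWithin_idw {s : Set ℝ} (hs : UniqueDiffOn ℝ s) (f : ℝ → ℝ)
    (n : ℕ) {x : ℝ} (hx : x ∈ s) :
    derivWithin (iteratedDerivWithin n f s) s x = iteratedDerivWithin (n+1) f s x :=
  (congrFun iteratedDerivWithin_succ x).symm

/-- Leibniz rule for iterated derivatives within a set. -/
private lemma idw_mul {s : Set ℝ} (hs : UniqueDiffOn ℝ s) {f g : ℝ → ℝ}
    (hf : ContDiffOn ℝ (⊤ : ℕ∞) f s) (hg : ContDiffOn ℝ (⊤ : ℕ∞) g s) (n : ℕ) :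
    ∀ x ∈ s, iteratedDerivWithin n (fun y => f y * g y) s x =
      ∑ i ∈ range (n+1), (n.choose i : ℝ) * iteratedDerivWithin i f s x
        * iteratedDerivWithin (n-i) g s x := by
  induction n with
  | zero => intro x hx; simp
  | succ n ih =>
    intro x hx
    have hdf : ∀ i, DifferentiableWithinAt ℝ (iteratedDerivWithin i f s) s x :=
      fun i => idw_diff hs hf i hx
    have hdg : ∀ i, DifferentiableWithinAt ℝ (iteratedDerivWithin i g s) s x :=
      fun i => idw_diff hs hg i hx
    have hterm : ∀ i, DifferentiableWithinAt ℝ (fun y => (n.choose i : ℝ) *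
        iteratedDerivWithin i f s y * iteratedDerivWithin (n-i) g s y) s x :=
      fun i => (((hdf i).const_mul _).mul (hdg (n-i)))
    calc iteratedDerivWithin (n+1) (fun y => f y * g y) s x
        = derivWithin (iteratedDerivWithin n (fun y => f y * g y) s) s x :=
          congrFun iteratedDerivWithin_succ x
      _ = derivWithin (fun y => ∑ i ∈ range (n+1), (n.choose i : ℝ) *
            iteratedDerivWithin i f s y * iteratedDerivWithin (n-i) g s y) s x :=
          derivWithin_congr (fun y hy => ih y hy) (ih x hx)
      _ = ∑ i ∈ range (n+1), ((n.choose i : ℝ) *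
            (iteratedDerivWithin (i+1) f s x * iteratedDerivWithin (n-i) g s x
             + iteratedDerivWithin i f s x * iteratedDerivWithin (n-i+1) g s x)) := by
          rw [derivWithin_fun_sum (fun i _ => hterm i)]
          · refine Finset.sum_congr rfl fun i _ => ?_
            rw [derivWithin_fun_mul ((hdf i).const_mul _) (hdg (n-i))]
            rw [derivWithin_const_mul _ (hdf i)]
            rw [derivWithin_idw hs f i hx, derivWithin_idw hs g (n-i) hx]
            ring
      _ = ∑ i ∈ range (n+2), ((n+1).choose i : ℝ) * iteratedDerivWithin i f s x
            * iteratedDerivWithin (n+1-i) g s x := by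
          have hb := binom_recomb (fun i j => iteratedDerivWithin i f s x * iteratedDerivWithin j g s x) n
          rw [show ∑ i ∈ range (n+2), ((n+1).choose i : ℝ) * iteratedDerivWithin i f s x
              * iteratedDerivWithin (n+1-i) g s x = ∑ i ∈ range (n+2), ((n+1).choose i : ℝ)
              * (iteratedDerivWithin i f s x * iteratedDerivWithin (n+1-i) g s x) from
            Finset.sum_congr rfl fun i _ => by ring]
          exact hb


private lemma idw_const {s : Set ℝ} (hs : UniqueDiffOn ℝ s) (c : ℝ) (n : ℕ) :
    ∀ x ∈ s, iteratedDerivWithin n (fun _ => c) s x = if n = 0 then c else 0 := by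
  induction n with
  | zero => intro x hx; simp
  | succ n ih =>
    intro x hx
    rw [iteratedDerivWithin_succ, derivWithin_congr (fun y hy => ih y hy) (ih x hx)]
    rcases eq_or_ne n 0 with h | h <;>
      simp [h, derivWithin_fun_const]

/-- W(f·u₀, …, f·u_{m-1}) = f^m · W(u₀, …, u_{m-1}) -/
private lemma wronskian_smul {s : Set ℝ} (hs : UniqueDiffOn ℝ s) (f : ℝ → ℝ) (u : ℕ → ℝ → ℝ)
    (hf : ContDiffOn ℝ (⊤ : ℕ∞) f s) (hu : ∀ i, ContDiffOn ℝ (⊤ : ℕ∞) (u i) s)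
    (m : ℕ) {x : ℝ} (hx : x ∈ s) :
    wronskianOn s (fun i y => f y * u i y) m x = (f x)^m * wronskianOn s u m x := by
  classical
  set L : Matrix (Fin m) (Fin m) ℝ := fun r i =>
    if (i : ℕ) ≤ (r : ℕ) then ((r : ℕ).choose i : ℝ) * iteratedDerivWithin ((r : ℕ) - i) f s x
    else 0 with hL
  set N : Matrix (Fin m) (Fin m) ℝ :=
    Matrix.of fun r c : Fin m => iteratedDerivWithin (r : ℕ) (u (c : ℕ)) s x with hN
  have key : (Matrix.of fun r c : Fin m =>
      iteratedDerivWithin (r : ℕ) (fun y => f y * u (c : ℕ) y) s x) = L * N := by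
    ext r c
    have leib := idw_mul hs (hu c) hf (r : ℕ) x hx
    have : iteratedDerivWithin (r : ℕ) (fun y => f y * u (c : ℕ) y) s x
        = iteratedDerivWithin (r : ℕ) (fun y => u (c : ℕ) y * f y) s x := by
      congr 1; ext y; ring
    rw [Matrix.of_apply, this, leib, Matrix.mul_apply]
    rw [Finset.sum_congr rfl (fun i (_ : i ∈ (univ : Finset (Fin m))) => rfl :
      ∀ i ∈ (univ : Finset (Fin m)), L r i * N i c = L r i * N i c)]
    have hsum : ∑ i : Fin m, L r i * N i c
        = ∑ i ∈ range m, (if i ≤ (r : ℕ) then ((r : ℕ).choose i : ℝ)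
            * iteratedDerivWithin ((r : ℕ) - i) f s x else 0)
            * iteratedDerivWithin i (u (c : ℕ)) s x := by
      rw [← Fin.sum_univ_eq_sum_range (fun i => (if i ≤ (r : ℕ) then ((r : ℕ).choose i : ℝ)
            * iteratedDerivWithin ((r : ℕ) - i) f s x else 0)
            * iteratedDerivWithin i (u (c : ℕ)) s x) m]
      rfl
    rw [hsum, ← Finset.sum_subset (Finset.range_subset_range.mpr (Nat.succ_le_of_lt r.2) :
        range ((r : ℕ)+1) ⊆ range m) (fun i _ hi => by
          rw [if_neg (by simpa using fun h => hi (Finset.mem_range.mpr (Nat.lt_succ_of_le h)))]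
          ring)]
    refine Finset.sum_congr rfl fun i hi => ?_
    rw [if_pos (Nat.lt_succ_iff.mp (Finset.mem_range.mp hi))]
    ring
  have hdetL : L.det = (f x)^m := by
    rw [Matrix.det_of_lowerTriangular L (fun i j hji => by
      simp only [hL]
      rw [if_neg (by exact_mod_cast Nat.not_le.mpr hji)])]
    have : ∀ i : Fin m, L i i = f x := fun i => by
      simp [hL, iteratedDerivWithin_zero]
    simp [this, Finset.prod_const, Finset.card_univ]
  rw [wronskianOn, key, Matrix.det_mul, hdetL, wronskianOn]

private lemma wronskianOn_one {s : Set ℝ} (g : ℕ → ℝ → ℝ) (x : ℝ) :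
    wronskianOn s g 1 x = g 0 x := by
  rw [wronskianOn, Matrix.det_fin_one]
  simp [iteratedDerivWithin_zero]

private lemma wronskianOn_congr {s : Set ℝ} (hs : UniqueDiffOn ℝ s) {g g' : ℕ → ℝ → ℝ}
    (h : ∀ i, Set.EqOn (g i) (g' i) s) (j : ℕ) {x : ℝ} (hx : x ∈ s) :
    wronskianOn s g j x = wronskianOn s g' j x := by
  unfold wronskianOn
  congr 1
  ext r c
  exact iteratedDerivWithin_congr (h c) hx

/-- If `u 0 ≡ 1` on `s`, then `W(u 0, …, u m) = W((u 1)', …, (u m)')`. -/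
private lemma wronskian_one_shift {s : Set ℝ} (hs : UniqueDiffOn ℝ s) (u : ℕ → ℝ → ℝ)
    (h1 : Set.EqOn (u 0) (fun _ => 1) s) (m : ℕ) {x : ℝ} (hx : x ∈ s) :
    wronskianOn s u (m+1) x = wronskianOn s (fun c => derivWithin (u (c+1)) s) m x := by
  have hcol : ∀ i : Fin (m+1), iteratedDerivWithin (i : ℕ) (u 0) s x
      = if (i : ℕ) = 0 then 1 else 0 := by
    intro i
    rw [iteratedDerivWithin_congr h1 hx, idw_const hs 1 (i : ℕ) x hx]
  rw [wronskianOn, Matrix.det_succ_column_zero]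
  rw [Finset.sum_eq_single (0 : Fin (m+1))]
  · simp only [Matrix.of_apply, Fin.val_zero, pow_zero, one_mul]
    rw [show iteratedDerivWithin 0 (u 0) s x = (1:ℝ) by
      rw [iteratedDerivWithin_zero]; exact h1 hx, one_mul]
    rw [wronskianOn]
    congr 1
    ext r c
    simp only [Matrix.submatrix_apply, Fin.succAbove_zero, Matrix.of_apply]
    have : ((r.succ : Fin (m+1)) : ℕ) = (r : ℕ) + 1 := rfl
    rw [this, iteratedDerivWithin_succ']
    norm_num [Fin.val_succ]
  · intro i _ hi
    rw [show (Matrix.of fun r c : Fin (m+1) => iteratedDerivWithin (r : ℕ) (u (c : ℕ)) s x) i 0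
        = iteratedDerivWithin (i : ℕ) (u 0) s x from rfl, hcol i]
    rw [if_neg (fun h => hi (Fin.ext (by simpa using h)))]
    ring
  · intro h; exact absurd (Finset.mem_univ _) h

/-- The key Wronskian reduction identity. -/
private lemma wronskian_div {s : Set ℝ} (hs : UniqueDiffOn ℝ s) (g : ℕ → ℝ → ℝ)
    (hg : ∀ i, ContDiffOn ℝ (⊤ : ℕ∞) (g i) s) (h0 : ∀ x ∈ s, g 0 x ≠ 0) (m : ℕ)
    {x : ℝ} (hx : x ∈ s) :
    wronskianOn s g (m+1) x = (g 0 x)^(m+1) *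
      wronskianOn s (fun c => derivWithin (fun y => g (c+1) y / g 0 y) s) m x := by
  set u : ℕ → ℝ → ℝ := fun i y => g i y / g 0 y with hu
  have husm : ∀ i, ContDiffOn ℝ (⊤ : ℕ∞) (u i) s := by
    intro i
    have := (hg i).div (hg 0) h0
    exact this
  have h1 : wronskianOn s g (m+1) x = wronskianOn s (fun i y => g 0 y * u i y) (m+1) x := by
    refine wronskianOn_congr hs (fun i y hy => ?_) (m+1) hx
    simp only [hu]
    field_simp [h0 y hy]
  have h2 := wronskian_smul hs (g 0) u (hg 0) husm (m+1) hx
  have h3 : Set.EqOn (u 0) (fun _ => 1) s := fun y hy => by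
    simp only [hu]; rw [div_self (h0 y hy)]
  rw [h1, h2, wronskian_one_shift hs u h3 m hx]

/-- Key lemma: if all prefix Wronskians are nonvanishing on an order-connected set `J`,
then a nontrivial linear combination has at most `k-1` zeros in `J`. -/
private lemma key : ∀ (k : ℕ) (J : Set ℝ), J.OrdConnected → UniqueDiffOn ℝ J →
    ∀ (g : ℕ → ℝ → ℝ), (∀ i, ContDiffOn ℝ (⊤ : ℕ∞) (g i) J) →
    (∀ j, 1 ≤ j → j ≤ k → ∀ x ∈ J, wronskianOn J g j x ≠ 0) →
    ∀ a : ℕ → ℝ, (∃ i < k, a i ≠ 0) →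
    ∀ S : Finset ℝ, (∀ x ∈ S, x ∈ J ∧ (∑ i ∈ range k, a i * g i x) = 0) →
    S.card ≤ k - 1 := by
  intro k
  induction k with
  | zero => rintro J _ _ g _ _ a ⟨i, hi, _⟩ S _; omega
  | succ k IH =>
    intro J hJord hJud g hg hW a ha S hS
    have hg0 : ∀ x ∈ J, g 0 x ≠ 0 := by
      intro x hx
      have := hW 1 le_rfl (by omega) x hx
      rwa [wronskianOn_one] at this
    by_cases hb : ∃ i < k, a (i+1) ≠ 0
    · -- main case: apply Rolle and induction
      set h : ℕ → ℝ → ℝ := fun c => derivWithin (fun y => g (c+1) y / g 0 y) J with hh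
      have hhsm : ∀ i, ContDiffOn ℝ (⊤ : ℕ∞) (h i) J := by
        intro i
        have hdiv : ContDiffOn ℝ (⊤ : ℕ∞) (fun y => g (i+1) y / g 0 y) J := by
          have := (hg (i+1)).div (hg 0) hg0
          exact this
        exact hdiv.derivWithin hJud (by exact_mod_cast le_top)
      have hWh : ∀ j, 1 ≤ j → j ≤ k → ∀ x ∈ J, wronskianOn J h j x ≠ 0 := by
        intro j hj1 hjk x hx hzero
        have := wronskian_div hJud g hg hg0 j hx
        rw [hh] at hzero
        rw [hzero, mul_zero] at this
        exact hW (j+1) (by omega) (by omega) x hx this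
      -- the quotient function
      set q : ℝ → ℝ := fun y => ∑ i ∈ range (k+1), a i * (g i y / g 0 y) with hq
      have hq0 : ∀ x ∈ S, q x = 0 := by
        intro x hx
        obtain ⟨hxJ, hsum⟩ := hS x hx
        have : q x = (∑ i ∈ range (k+1), a i * g i x) / g 0 x := by
          rw [Finset.sum_div]
          exact Finset.sum_congr rfl fun i _ => by ring
        rw [this, hsum, zero_div]
      have hqsm : ContDiffOn ℝ (⊤ : ℕ∞) q J := by
        apply ContDiffOn.sum
        intro i _
        exact ((hg i).div (hg 0) hg0).const_smul (a i) |>.congr fun y _ => by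
          simp [smul_eq_mul]
      -- derivWithin of q
      have hqD : ∀ x ∈ J, derivWithin q J x = ∑ i ∈ range k, a (i+1) * h i x := by
        intro x hx
        have hdiffs : ∀ i ∈ range (k+1), DifferentiableWithinAt ℝ
            (fun y => a i * (g i y / g 0 y)) J x := by
          intro i _
          exact (((hg i).div (hg 0) hg0).differentiableOn
            (by simp) x hx).const_mul _
        rw [hq]
        rw [derivWithin_fun_sum hdiffs]
        have hterm : ∀ i ∈ range (k+1), derivWithin (fun y => a i * (g i y / g 0 y)) J x
            = a i * derivWithin (fun y => g i y / g 0 y) J x := by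
          intro i _
          exact derivWithin_const_mul _ (((hg i).div (hg 0) hg0).differentiableOn
            (by simp) x hx)
        rw [Finset.sum_congr rfl hterm, Finset.sum_range_succ']
        have h00 : derivWithin (fun y => g 0 y / g 0 y) J x = 0 := by
          rw [derivWithin_congr (fun y hy => div_self (hg0 y hy))
            (div_self (hg0 x hx))]
          exact congrFun (derivWithin_fun_const J (1:ℝ)) x
        rw [h00, mul_zero, add_zero]
      -- Rolle step
      set m := S.card with hm
      rcases Nat.lt_or_ge m 2 with hm2 | hm2
      · omega
      have hmpos : 1 ≤ m := by omega
      set e := S.orderIsoOfFin rfl with he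
      have hemem : ∀ i : Fin m, (e i : ℝ) ∈ S := fun i => (e i).2
      -- for each i : Fin (m-1), a Rolle point
      have hroll : ∀ i : Fin (m-1), ∃ ξ : ℝ,
          ξ ∈ Set.Ioo (e ⟨i, by omega⟩ : ℝ) (e ⟨(i:ℕ)+1, by have := i.2; omega⟩ : ℝ)
          ∧ deriv q ξ = 0 := by
        intro i
        have hi1 : (i : ℕ) < m := by have := i.2; omega
        have hi2 : (i : ℕ)+1 < m := by have := i.2; omega
        set x1 : ℝ := (e ⟨i, hi1⟩ : ℝ)
        set x2 : ℝ := (e ⟨(i:ℕ)+1, hi2⟩ : ℝ)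
        have hlt : x1 < x2 := by
          have : (⟨(i:ℕ), hi1⟩ : Fin m) < ⟨(i:ℕ)+1, hi2⟩ := by
            simp [Fin.lt_def]
          exact e.strictMono this
        have hx1J : x1 ∈ J := (hS x1 (hemem _)).1
        have hx2J : x2 ∈ J := (hS x2 (hemem _)).1
        have hIcc : Set.Icc x1 x2 ⊆ J := hJord.out hx1J hx2J
        have hcont : ContinuousOn q (Set.Icc x1 x2) :=
          (hqsm.continuousOn).mono hIcc
        have heq : q x1 = q x2 := by
          rw [hq0 x1 (hemem _), hq0 x2 (hemem _)]
        obtain ⟨c, hc, hc0⟩ := exists_deriv_eq_zero hlt hcont heq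
        exact ⟨c, hc, hc0⟩
      choose ξ hξmem hξ0 using hroll
      have hξJ : ∀ i, ξ i ∈ J := by
        intro i
        have h1 : (e ⟨i, by omega⟩ : ℝ) ∈ J := (hS _ (hemem _)).1
        have h2 : (e ⟨(i:ℕ)+1, by have := i.2; omega⟩ : ℝ) ∈ J := (hS _ (hemem _)).1
        exact hJord.out h1 h2 ⟨(hξmem i).1.le, (hξmem i).2.le⟩
      have hξzero : ∀ i, ∑ j ∈ range k, a (j+1) * h j (ξ i) = 0 := by
        intro i
        rw [← hqD (ξ i) (hξJ i)]
        have hJnhds : J ∈ nhds (ξ i) := by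
          apply mem_nhds_iff.mpr
          exact ⟨Set.Ioo _ _, fun y hy => hJord.out (hS _ (hemem _)).1 (hS _ (hemem _)).1
            ⟨hy.1.le, hy.2.le⟩, isOpen_Ioo, hξmem i⟩
        rw [derivWithin_of_mem_nhds hJnhds]
        exact hξ0 i
      have hξmono : StrictMono ξ := by
        intro i j hij
        have hi2 : (i:ℕ)+1 < m := by have := i.2; omega
        have hj1 : (j:ℕ) < m := by have := j.2; omega
        calc ξ i < (e ⟨(i:ℕ)+1, hi2⟩ : ℝ) := (hξmem i).2
          _ ≤ (e ⟨(j:ℕ), hj1⟩ : ℝ) := by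
              rcases eq_or_lt_of_le (show (i:ℕ)+1 ≤ (j:ℕ) from hij) with h | h
              · have hfe : (⟨(i:ℕ)+1, hi2⟩ : Fin m) = ⟨(j:ℕ), hj1⟩ := by
                  ext; simpa using h
                exact le_of_eq (by rw [hfe])
              · exact (e.strictMono (show (⟨(i:ℕ)+1, hi2⟩ : Fin m) < ⟨(j:ℕ), hj1⟩ from h)).le
          _ < ξ j := (hξmem j).1
      set T : Finset ℝ := Finset.image ξ Finset.univ with hT
      have hTcard : T.card = m - 1 := by
        rw [hT, Finset.card_image_of_injective _ hξmono.injective, Finset.card_univ,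
          Fintype.card_fin]
      have hTsub : ∀ x ∈ T, x ∈ J ∧ (∑ i ∈ range k, a (i+1) * h i x) = 0 := by
        intro x hx
        obtain ⟨i, _, rfl⟩ := Finset.mem_image.mp hx
        exact ⟨hξJ i, hξzero i⟩
      have := IH J hJord hJud h hhsm hWh (fun i => a (i+1)) hb T hTsub
      rw [hTcard] at this
      obtain ⟨i0, hi0, _⟩ := hb
      omega
    · -- all a (i+1) = 0 for i < k; so a 0 ≠ 0 and the sum is a 0 * g 0, never zero
      push_neg at hb
      have ha0 : a 0 ≠ 0 := by
        obtain ⟨i, hi, hne⟩ := ha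
        rcases Nat.eq_zero_or_pos i with rfl | hpos
        · exact hne
        · exact absurd (hb (i-1) (by omega)) (by
            rw [show i - 1 + 1 = i from by omega]; exact fun h => hne h)
      have hempty : S = ∅ := by
        rw [Finset.eq_empty_iff_forall_notMem]
        intro x hx
        obtain ⟨hxJ, hsum⟩ := hS x hx
        rw [Finset.sum_range_succ'] at hsum
        have : ∑ i ∈ range k, a (i+1) * g (i+1) x = 0 :=
          Finset.sum_eq_zero fun i hi => by rw [hb i (Finset.mem_range.mp hi), zero_mul]
        rw [this, zero_add] at hsum
        exact (mul_ne_zero ha0 (hg0 x hxJ)) hsum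
      rw [hempty]
      simp

/-- If `f 0, …, f (k-1)` are analytic on an interval `I` and the set `Υ` of points of `I`
where some Wronskian `W(f 0, …, f (i-1))`, `1 ≤ i ≤ k`, vanishes is finite, then any
nontrivial linear combination has at most `(1 + |Υ|) * k - 1` distinct zeros in `I`. -/
theorem stmt2 (k : ℕ) (hk : 1 ≤ k) (I : Set ℝ) (hI : I.OrdConnected) (hI' : I.Nontrivial)
    (f : ℕ → ℝ → ℝ) (hf : ∀ i < k, AnalyticOn ℝ (f i) I)
    (hΥ : {x ∈ I | ∃ i, 1 ≤ i ∧ i ≤ k ∧ wronskianOn I f i x = 0}.Finite)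
    (a : ℕ → ℝ) (ha : ∃ i < k, a i ≠ 0) :
    {x ∈ I | (∑ i ∈ Finset.range k, a i * f i x) = 0}.Finite ∧
      {x ∈ I | (∑ i ∈ Finset.range k, a i * f i x) = 0}.ncard ≤
        (1 + {x ∈ I | ∃ i, 1 ≤ i ∧ i ≤ k ∧ wronskianOn I f i x = 0}.ncard) * k - 1 := by
  classical
  set Υ : Set ℝ := {x ∈ I | ∃ i, 1 ≤ i ∧ i ≤ k ∧ wronskianOn I f i x = 0} with hΥdef
  set Z : Set ℝ := {x ∈ I | (∑ i ∈ Finset.range k, a i * f i x) = 0} with hZdef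
  set ΥF : Finset ℝ := hΥ.toFinset with hΥF
  set n : ℕ := ΥF.card with hn
  have hncard : Υ.ncard = n := by
    rw [hn, ← Set.ncard_coe_finset, hΥF, Set.Finite.coe_toFinset]
  -- counting function
  set c : ℝ → ℕ := fun z => (ΥF.filter (fun y => y < z)).card with hc
  have hmono : ∀ {w w'}, w ≤ w' → c w ≤ c w' := by
    intro w w' hw
    exact Finset.card_le_card (fun y hy => by
      rw [Finset.mem_filter] at hy ⊢
      exact ⟨hy.1, lt_of_lt_of_le hy.2 hw⟩)
  have hstrict : ∀ {w z w'}, w ≤ z → z < w' → z ∈ Υ → c w < c w' := by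
    intro w z w' h1 h2 hz
    have hzF : z ∈ ΥF := by rw [hΥF, Set.Finite.mem_toFinset]; exact hz
    have hsub : insert z (ΥF.filter (fun y => y < w)) ⊆ ΥF.filter (fun y => y < w') := by
      intro y hy
      rcases Finset.mem_insert.mp hy with rfl | hy
      · exact Finset.mem_filter.mpr ⟨hzF, h2⟩
      · rw [Finset.mem_filter] at hy ⊢
        exact ⟨hy.1, lt_of_lt_of_le hy.2 (h1.trans h2.le)⟩
    have hnotmem : z ∉ ΥF.filter (fun y => y < w) := by
      rw [Finset.mem_filter]
      exact fun h => absurd h.2 (not_lt.mpr h1)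
    have hle := Finset.card_le_card hsub
    rw [Finset.card_insert_of_notMem hnotmem] at hle
    show (ΥF.filter (fun y => y < w)).card < (ΥF.filter (fun y => y < w')).card
    omega
  -- the pieces
  set O : ℕ → Set ℝ := fun t => {z : ℝ | z ∉ Υ ∧ c z = t} with hO
  have hOopen : ∀ t, IsOpen (O t) := by
    intro t
    rw [Metric.isOpen_iff]
    rintro z ⟨hz1, hz2⟩
    obtain ⟨ε, hε, hball⟩ := Metric.isOpen_iff.mp hΥ.isClosed.isOpen_compl z hz1
    refine ⟨ε, hε, ?_⟩
    intro w hw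
    have hwc : w ∉ Υ := hball hw
    have hfeq : ΥF.filter (fun y => y < w) = ΥF.filter (fun y => y < z) := by
      apply Finset.filter_congr
      intro y hy
      have hyΥ : y ∈ Υ := by rwa [hΥF, Set.Finite.mem_toFinset] at hy
      have hynb : y ∉ Metric.ball z ε := fun h => (hball h) hyΥ
      rw [Real.ball_eq_Ioo, Set.mem_Ioo, not_and_or, not_lt, not_lt] at hynb
      rw [Real.ball_eq_Ioo, Set.mem_Ioo] at hw
      constructor <;> intro hlt <;> rcases hynb with h | h <;> linarith
    refine ⟨hwc, ?_⟩
    show (ΥF.filter (fun y => y < w)).card = t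
    rw [hfeq]
    exact hz2
  have hOord : ∀ t, (O t).OrdConnected := by
    intro t
    constructor
    rintro z1 ⟨hz1a, hz1b⟩ z2 ⟨hz2a, hz2b⟩ z hz
    have hzΥ : z ∉ Υ := by
      intro hmem
      have hne1 : z ≠ z1 := fun h => hz1a (h ▸ hmem)
      have hne2 : z ≠ z2 := fun h => hz2a (h ▸ hmem)
      have := hstrict (lt_of_le_of_ne hz.1 (Ne.symm hne1)).le
        (lt_of_le_of_ne hz.2 hne2) hmem
      omega
    refine ⟨hzΥ, le_antisymm ?_ ?_⟩
    · rw [← hz2b]; exact hmono hz.2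
    · rw [← hz1b]; exact hmono hz.1
  -- main finset bound
  have claim : ∀ S : Finset ℝ, (∀ x ∈ S, x ∈ Z) → S.card ≤ (1 + n) * k - 1 := by
    intro S hS
    have hsplit := Finset.card_filter_add_card_filter_not (s := S)
      (p := fun x => x ∈ Υ)
    set S1 := S.filter (fun x => x ∈ Υ) with hS1
    set S' := S.filter (fun x => ¬ x ∈ Υ) with hS'
    have hS1card : S1.card ≤ n := by
      apply Finset.card_le_card
      intro x hx
      rw [hΥF, Set.Finite.mem_toFinset]
      exact (Finset.mem_filter.mp hx).2
    have hfiber : S'.card = ∑ t ∈ Finset.range (n+1), (S'.filter (fun z => c z = t)).card := by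
      apply Finset.card_eq_sum_card_fiberwise
      intro x _
      rw [Finset.mem_coe, Finset.mem_range]
      have : c x ≤ n := Finset.card_le_card (Finset.filter_subset _ _)
      omega
    have hfib_bound : ∀ t, (S'.filter (fun z => c z = t)).card ≤ k - 1 := by
      intro t
      set B := S'.filter (fun z => c z = t) with hB
      have hBmem : ∀ x ∈ B, x ∈ I ∧ x ∈ O t ∧ (∑ i ∈ Finset.range k, a i * f i x) = 0 := by
        intro x hx
        rw [hB, Finset.mem_filter] at hx
        obtain ⟨hx1, hx2⟩ := hx
        rw [hS', Finset.mem_filter] at hx1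
        obtain ⟨hx3, hx4⟩ := hx1
        have hxZ := hS x hx3
        rw [hZdef] at hxZ
        exact ⟨hxZ.1, ⟨hx4, hx2⟩, hxZ.2⟩
      have hWne : ∀ x ∈ I, x ∉ Υ → ∀ j, 1 ≤ j → j ≤ k → wronskianOn I f j x ≠ 0 := by
        intro x hxI hxΥ j h1 h2 h0
        exact hxΥ ⟨hxI, j, h1, h2, h0⟩
      rcases Nat.lt_or_ge B.card 2 with hc2 | hc2
      · -- ≤ 1 element
        rcases Nat.lt_or_ge k 2 with hk2 | hk2
        · -- k = 1 : B must be empty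
          have hk1 : k = 1 := by omega
          have : B = ∅ := by
            rw [Finset.eq_empty_iff_forall_notMem]
            intro x hx
            obtain ⟨hxI, ⟨hxΥ, _⟩, hsum⟩ := hBmem x hx
            subst hk1
            rw [Finset.sum_range_one] at hsum
            obtain ⟨i, hi, hai⟩ := ha
            have hi0 : i = 0 := by omega
            subst hi0
            have hf0 : f 0 x = 0 := by
              rcases mul_eq_zero.mp hsum with h | h
              · exact absurd h hai
              · exact h
            exact hWne x hxI hxΥ 1 le_rfl le_rfl (by rw [wronskianOn_one]; exact hf0)
          rw [this]; simp
        · omega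
      · -- at least 2 elements: use the key lemma
        obtain ⟨z1, hz1, z2, hz2, hzne⟩ := Finset.one_lt_card.mp hc2
        set J : Set ℝ := I ∩ O t with hJ
        have hJord : J.OrdConnected := hI.inter (hOord t)
        have hz1J : z1 ∈ J := ⟨(hBmem z1 hz1).1, (hBmem z1 hz1).2.1⟩
        have hz2J : z2 ∈ J := ⟨(hBmem z2 hz2).1, (hBmem z2 hz2).2.1⟩
        have hJud : UniqueDiffOn ℝ J := by
          apply uniqueDiffOn_convex hJord.convex
          rcases lt_or_gt_of_ne hzne with hlt | hlt
          · refine ⟨z1 + (z2-z1)/2, (isOpen_Ioo).subset_interior_iff.mpr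
              (Set.Ioo_subset_Icc_self.trans (hJord.out hz1J hz2J)) ⟨by linarith, by linarith⟩⟩
          · refine ⟨z2 + (z1-z2)/2, (isOpen_Ioo).subset_interior_iff.mpr
              (Set.Ioo_subset_Icc_self.trans (hJord.out hz2J hz1J)) ⟨by linarith, by linarith⟩⟩
        set f' : ℕ → ℝ → ℝ := fun i => if i < k then f i else fun _ => 0 with hf'
        have hf'sm : ∀ i, ContDiffOn ℝ (⊤ : ℕ∞) (f' i) J := by
          intro i
          show ContDiffOn ℝ (⊤ : ℕ∞) (if i < k then f i else fun _ => 0) J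
          by_cases hik : i < k
          · rw [if_pos hik]
            exact ((hf i hik).mono Set.inter_subset_left).contDiffOn hJud
          · rw [if_neg hik]
            exact contDiffOn_const
        have hWeq : ∀ j, j ≤ k → ∀ x ∈ J, wronskianOn J f' j x = wronskianOn I f j x := by
          intro j hjk x hx
          have h1 : wronskianOn J f' j x = wronskianOn J f j x := by
            unfold wronskianOn
            congr 1
            ext r cc
            simp only [Matrix.of_apply]
            have hcc : f' (cc:ℕ) = f (cc:ℕ) := by
              show (if (cc:ℕ) < k then f (cc:ℕ) else fun _ => 0) = f (cc:ℕ)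
              rw [if_pos (lt_of_lt_of_le cc.2 hjk)]
            rw [hcc]
          have h2 : wronskianOn J f j x = wronskianOn I f j x := by
            unfold wronskianOn
            congr 1
            ext r cc
            simp only [Matrix.of_apply, hJ]
            rw [show iteratedDerivWithin (r:ℕ) (f (cc:ℕ)) (I ∩ O t) x
                = iteratedDerivWithin (r:ℕ) (f (cc:ℕ)) I x from by
              simp only [iteratedDerivWithin, iteratedFDerivWithin_inter
                ((hOopen t).mem_nhds hx.2)]]
          rw [h1, h2]
        have hWJ : ∀ j, 1 ≤ j → j ≤ k → ∀ x ∈ J, wronskianOn J f' j x ≠ 0 := by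
          intro j h1 h2 x hx
          rw [hWeq j h2 x hx]
          exact hWne x hx.1 hx.2.1 j h1 h2
        have hBzero : ∀ x ∈ B, x ∈ J ∧ (∑ i ∈ Finset.range k, a i * f' i x) = 0 := by
          intro x hx
          obtain ⟨hxI, hxO, hsum⟩ := hBmem x hx
          refine ⟨⟨hxI, hxO⟩, ?_⟩
          rw [show (∑ i ∈ Finset.range k, a i * f' i x) =
              ∑ i ∈ Finset.range k, a i * f i x from Finset.sum_congr rfl fun i hi => by
            have : f' i = f i := by
              show (if i < k then f i else fun _ => 0) = f i
              rw [if_pos (Finset.mem_range.mp hi)]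
            rw [this]]
          exact hsum
        exact key k J hJord hJud f' hf'sm hWJ a ha B hBzero
    have hS'card : S'.card ≤ (n+1) * (k-1) := by
      rw [hfiber]
      calc ∑ t ∈ Finset.range (n+1), (S'.filter (fun z => c z = t)).card
          ≤ ∑ _t ∈ Finset.range (n+1), (k-1) := Finset.sum_le_sum fun t _ => hfib_bound t
        _ = (n+1) * (k-1) := by rw [Finset.sum_const, Finset.card_range, smul_eq_mul]
    obtain ⟨k', rfl⟩ : ∃ k', k = k' + 1 := ⟨k - 1, by omega⟩
    have e1 : (1 + n) * (k' + 1) = (n + 1) * k' + (n + 1) := by ring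
    have : S.card = S1.card + S'.card := hsplit.symm
    rw [Nat.add_sub_cancel] at hS'card
    omega
  -- conclude
  have hZfin : Z.Finite := by
    by_contra hinf
    have hinf' : Z.Infinite := hinf
    obtain ⟨T, hT, hTcard⟩ := hinf'.exists_subset_card_eq ((1 + n) * k)
    have := claim T (fun x hx => hT hx)
    rw [hTcard] at this
    have hpos : 1 * 1 ≤ (1 + n) * k := Nat.mul_le_mul (by omega) hk
    omega
  refine ⟨hZfin, ?_⟩
  rw [hncard]
  have : Z.ncard = hZfin.toFinset.card := by
    rw [← Set.ncard_coe_finset, Set.Finite.coe_toFinset]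
  rw [this]
  exact claim hZfin.toFinset (fun x hx => (Set.Finite.mem_toFinset hZfin).mp hx)
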